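/- arXiv:2404.05418 — 2 statements merged into one kernel-verified Lean document; each statement's English description precedes it below -/
import Mathlib

section
/- Let Δ₀, δ, φ, φ_ε be real numbers with 0 < Δ₀ ≤ π, Δ₀/2 ≤ δ ≤ Δ₀, Δ₀/2 < φ_ε ≤ φ, and φ − δ/2 ≤ π − (φ_ε − Δ₀/2). Then cos(φ − δ) − cos(φ) ≥ 2·sin(Δ₀/4)·sin(φ_ε − Δ₀/2) > 0. -/
open Real

lemma sin_ge_of_mem (a x : ℝ) (ha : 0 < a) (h1 : a ≤ x) (h2 : x ≤ Real.pi - a) :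
    Real.sin a ≤ Real.sin x := by
  have hpi := Real.pi_pos
  rcases le_or_gt x (Real.pi / 2) with h | h
  · exact Real.sin_le_sin_of_le_of_le_pi_div_two (by linarith) (by linarith) h1
  · rw [← Real.sin_pi_sub x]
    exact Real.sin_le_sin_of_le_of_le_pi_div_two (by linarith) (by linarith) (by linarith)

/-- Quantitative step in the proof of Proposition 3 (Appendix B): under the
stated angle conditions, `cos(φ − δ) − cos φ ≥ 2·sin(Δ₀/4)·sin(φ_ε − Δ₀/2) > 0`. -/
theorem stmt_11 (Δ₀ δ φ φε : ℝ) (h1 : 0 < Δ₀) (h2 : Δ₀ ≤ Real.pi)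
    (h3 : Δ₀ / 2 ≤ δ) (h4 : δ ≤ Δ₀) (h5 : Δ₀ / 2 < φε) (h6 : φε ≤ φ)
    (h7 : φ - δ / 2 ≤ Real.pi - (φε - Δ₀ / 2)) :
    2 * Real.sin (Δ₀ / 4) * Real.sin (φε - Δ₀ / 2) ≤
        Real.cos (φ - δ) - Real.cos φ ∧
      0 < 2 * Real.sin (Δ₀ / 4) * Real.sin (φε - Δ₀ / 2) := by
  have hpi := Real.pi_pos
  have key : Real.cos (φ - δ) - Real.cos φ
      = 2 * Real.sin (δ / 2) * Real.sin (φ - δ / 2) := by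
    rw [Real.cos_sub_cos, show (φ - δ + φ) / 2 = φ - δ / 2 by ring,
      show (φ - δ - φ) / 2 = -(δ/2) by ring, Real.sin_neg]
    ring
  have ha : 0 < φε - Δ₀ / 2 := by linarith
  have ha2 : φε - Δ₀ / 2 ≤ Real.pi / 2 := by linarith
  have hs1 : Real.sin (Δ₀ / 4) ≤ Real.sin (δ / 2) :=
    Real.sin_le_sin_of_le_of_le_pi_div_two (by linarith) (by linarith) (by linarith)
  have hs2 : Real.sin (φε - Δ₀ / 2) ≤ Real.sin (φ - δ / 2) :=
    sin_ge_of_mem _ _ ha (by linarith) h7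
  have hp1 : 0 < Real.sin (Δ₀ / 4) := Real.sin_pos_of_pos_of_lt_pi (by linarith) (by linarith)
  have hp2 : 0 < Real.sin (φε - Δ₀ / 2) :=
    Real.sin_pos_of_pos_of_lt_pi ha (by linarith)
  refine ⟨?_, by positivity⟩
  rw [key]
  have := mul_le_mul hs1 hs2 hp2.le (Real.sin_nonneg_of_nonneg_of_le_pi (by linarith) (by linarith))
  nlinarith
end

section
/- Let (Ω, μ) be a probability space, C a real constant, and (Y_n)_{n∈ℕ} a sequence of integrable real-valued random variables such that almost surely Y_n ≤ Y_{n+1} for every n and Y_n ≤ C for every n. Suppose that for every ε > 0 there exist ε₁ > 0 and ρ > 0 such that for every n: μ( {ω : Y_{n+1}(ω) − Y_n(ω) ≥ ε₁} ∩ {ω : Y_n(ω) ≤ C − ε} ) ≥ ρ · μ( {ω : Y_n(ω) ≤ C − ε} ). Then Y_n converges to C almost surely. -/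
open MeasureTheory

private theorem stmt13_aux {Ω : Type*} [MeasurableSpace Ω] (μ : Measure Ω)
    [IsProbabilityMeasure μ] (C : ℝ) (Y : ℕ → Ω → ℝ)
    (hint : ∀ n, Integrable (Y n) μ)
    (hmono : ∀ᵐ ω ∂μ, ∀ n, Y n ω ≤ Y (n + 1) ω)
    (hbdd : ∀ᵐ ω ∂μ, ∀ n, Y n ω ≤ C)
    (himp : ∀ ε > (0 : ℝ), ∃ ε₁ > (0 : ℝ), ∃ ρ > (0 : ℝ), ∀ n : ℕ,
      ENNReal.ofReal ρ * μ {ω | Y n ω ≤ C - ε} ≤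
        μ ({ω | ε₁ ≤ Y (n + 1) ω - Y n ω} ∩ {ω | Y n ω ≤ C - ε}))
    {ε : ℝ} (hε : 0 < ε) :
    μ (⋂ n, {ω | Y n ω ≤ C - ε}) = 0 := by
  obtain ⟨ε₁, hε₁, ρ, hρ, H⟩ := himp ε hε
  set f : ℕ → Ω → ℝ := fun n ω => Y (n + 1) ω - Y n ω with hf
  have hfint : ∀ n, Integrable (f n) μ := fun n => (hint (n+1)).sub (hint n)
  have hfnn : ∀ n, 0 ≤ᵐ[μ] f n := by
    intro n
    filter_upwards [hmono] with ω hω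
    simpa [f] using sub_nonneg.mpr (hω n)
  set g : ℕ → ℝ := fun n => (μ {x | ε₁ ≤ f n x}).toReal with hg
  have hgnn : ∀ n, 0 ≤ g n := fun n => ENNReal.toReal_nonneg
  have hMarkov : ∀ n, ε₁ * g n ≤ ∫ x, f n x ∂μ := fun n =>
    mul_meas_ge_le_integral_of_nonneg (hfnn n) (hfint n) ε₁
  have hintYle : ∀ n, ∫ x, Y n x ∂μ ≤ C := by
    intro n
    calc ∫ x, Y n x ∂μ ≤ ∫ _x, C ∂μ := by
          refine integral_mono_ae (hint n) (integrable_const C) ?_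
          filter_upwards [hbdd] with ω hω using hω n
      _ = C := by simp
  -- partial sums of g bounded
  have hsum : ∀ N, ∑ n ∈ Finset.range N, g n ≤ (C - ∫ x, Y 0 x ∂μ) / ε₁ := by
    intro N
    have h1 : ∑ n ∈ Finset.range N, ε₁ * g n ≤ ∑ n ∈ Finset.range N, ∫ x, f n x ∂μ :=
      Finset.sum_le_sum fun n _ => hMarkov n
    have h2 : ∑ n ∈ Finset.range N, ∫ x, f n x ∂μ = (∫ x, Y N x ∂μ) - ∫ x, Y 0 x ∂μ := by
      have : ∀ n, ∫ x, f n x ∂μ = (∫ x, Y (n+1) x ∂μ) - ∫ x, Y n x ∂μ := fun n =>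
        integral_sub (hint (n+1)) (hint n)
      simp only [this]
      exact Finset.sum_range_sub (fun n => ∫ x, Y n x ∂μ) N
    have h3 : ε₁ * ∑ n ∈ Finset.range N, g n ≤ C - ∫ x, Y 0 x ∂μ := by
      rw [Finset.mul_sum]
      calc _ ≤ (∫ x, Y N x ∂μ) - ∫ x, Y 0 x ∂μ := by rw [← h2]; exact h1
        _ ≤ C - ∫ x, Y 0 x ∂μ := by linarith [hintYle N]
    rw [le_div_iff₀ hε₁, mul_comm]
    exact h3
  have hsummable : Summable g :=
    summable_of_sum_range_le hgnn hsum
  have hgtendsto : Filter.Tendsto g Filter.atTop (nhds 0) := hsummable.tendsto_atTop_zero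
  -- key bound
  set B := ⋂ n, {ω | Y n ω ≤ C - ε} with hB
  have hbound : ∀ n, ρ * (μ B).toReal ≤ g n := by
    intro n
    have h1 : μ B ≤ μ {ω | Y n ω ≤ C - ε} := measure_mono (Set.iInter_subset _ n)
    have h2 : ENNReal.ofReal ρ * μ B ≤ μ {x | ε₁ ≤ f n x} := by
      calc ENNReal.ofReal ρ * μ B ≤ ENNReal.ofReal ρ * μ {ω | Y n ω ≤ C - ε} := by
            exact mul_le_mul_right h1 _
        _ ≤ μ ({ω | ε₁ ≤ f n ω} ∩ {ω | Y n ω ≤ C - ε}) := H n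
        _ ≤ μ {x | ε₁ ≤ f n x} := measure_mono Set.inter_subset_left
    have h3 := ENNReal.toReal_mono (measure_ne_top μ _) h2
    rwa [ENNReal.toReal_mul, ENNReal.toReal_ofReal hρ.le] at h3
  have hle : ρ * (μ B).toReal ≤ 0 :=
    ge_of_tendsto hgtendsto (Filter.Eventually.of_forall hbound)
  have h0 : (μ B).toReal = 0 := by nlinarith [ENNReal.toReal_nonneg (a := μ B)]
  exact (ENNReal.toReal_eq_zero_iff _).mp h0 |>.resolve_right (measure_ne_top μ B)


/-- Abstract form of Theorem 1 combined with Proposition 3: an a.s. monotone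
sequence of integrable random variables bounded above by `C`, which whenever at
least `ε` below `C` has conditional probability at least `ρ` of improving by at
least `ε₁`, converges to `C` almost surely. -/
theorem stmt_13 {Ω : Type*} [MeasurableSpace Ω] (μ : Measure Ω)
    [IsProbabilityMeasure μ] (C : ℝ) (Y : ℕ → Ω → ℝ)
    (hint : ∀ n, Integrable (Y n) μ)
    (hmono : ∀ᵐ ω ∂μ, ∀ n, Y n ω ≤ Y (n + 1) ω)
    (hbdd : ∀ᵐ ω ∂μ, ∀ n, Y n ω ≤ C)
    (himp : ∀ ε > (0 : ℝ), ∃ ε₁ > (0 : ℝ), ∃ ρ > (0 : ℝ), ∀ n : ℕ,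
      ENNReal.ofReal ρ * μ {ω | Y n ω ≤ C - ε} ≤
        μ ({ω | ε₁ ≤ Y (n + 1) ω - Y n ω} ∩ {ω | Y n ω ≤ C - ε})) :
    ∀ᵐ ω ∂μ, Filter.Tendsto (fun n => Y n ω) Filter.atTop (nhds C) := by
  have hnull : ∀ k : ℕ, μ (⋂ n, {ω | Y n ω ≤ C - 1 / (k + 1)}) = 0 := fun k =>
    stmt13_aux μ C Y hint hmono hbdd himp (by positivity)
  have hae : ∀ᵐ ω ∂μ, ∀ k : ℕ, ω ∉ ⋂ n, {ω | Y n ω ≤ C - 1 / (k + 1)} :=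
    ae_all_iff.mpr fun k => by
      rw [← measure_eq_zero_iff_ae_notMem]; exact hnull k
  filter_upwards [hmono, hbdd, hae] with ω h1 h2 h3
  have mono : Monotone fun n => Y n ω := monotone_nat_of_le_succ h1
  have bdd : BddAbove (Set.range fun n => Y n ω) :=
    ⟨C, by rintro x ⟨n, rfl⟩; exact h2 n⟩
  have ht := tendsto_atTop_ciSup mono bdd
  have hsle : (⨆ n, Y n ω) ≤ C := ciSup_le fun n => h2 n
  have hge : C ≤ ⨆ n, Y n ω := by
    by_contra hlt
    push_neg at hlt
    obtain ⟨k, hk⟩ : ∃ k : ℕ, 1 / ((k : ℝ) + 1) < C - ⨆ n, Y n ω :=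
      exists_nat_one_div_lt (by linarith)
    have h3k := h3 k
    simp only [Set.mem_iInter, Set.mem_setOf_eq, not_forall] at h3k
    obtain ⟨n, hn⟩ := h3k
    have hle := le_ciSup bdd n
    push_neg at hn
    linarith
  have : (⨆ n, Y n ω) = C := le_antisymm hsle hge
  rwa [this] at ht
end
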